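/- Let x ∈ [3/4, 1], ε > 0 sufficiently small, J = 10, and let μ₁,…,μ_J, ν₁,…,ν_J be nonnegative reals with ∑ᵢ μᵢ + ∑ⱼ νⱼ = x, each μᵢ ≤ x/J, and ν₁ ≥ ν₂ ≥ … ≥ ν_J. Suppose no subsum σ = ∑_{i∈I} μᵢ + ∑_{j∈J'} νⱼ (over subsets I, J' of {1,…,J}) lies in the interval [x/6 - ε, x/3 + ε]. Then ν₁ + ν₂ ≥ 5x/6 + ε. -/
import Mathlib


open Finset

/-- combinatorial subsum dichotomy with `J = 10`. -/
theorem stmt_7 (x ε : ℝ) (hx : 3 / 4 ≤ x) (hx1 : x ≤ 1)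
    (hε : 0 < ε) (hεs : ε < x / 100)
    (μ ν : Fin 10 → ℝ) (hμ0 : ∀ i, 0 ≤ μ i) (hν0 : ∀ j, 0 ≤ ν j)
    (hsum : ∑ i, μ i + ∑ j, ν j = x)
    (hμ : ∀ i, μ i ≤ x / 10)
    (hνmono : ∀ i j : Fin 10, i ≤ j → ν j ≤ ν i)
    (hno : ∀ I J' : Finset (Fin 10),
      ¬(x / 6 - ε ≤ ∑ i ∈ I, μ i + ∑ j ∈ J', ν j ∧
        ∑ i ∈ I, μ i + ∑ j ∈ J', ν j ≤ x / 3 + ε)) :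
    ν 0 + ν 1 ≥ 5 * x / 6 + ε := by
  have hx0 : (0:ℝ) < x := by linarith
  have hν2 : ν 2 < x / 6 - ε := by
    by_contra hcon
    push_neg at hcon
    have h := hno ∅ ({2} : Finset (Fin 10))
    rw [Finset.sum_empty, Finset.sum_singleton, zero_add] at h
    have h2 : x / 3 + ε < ν 2 := by
      by_contra h'
      push_neg at h'
      exact h ⟨hcon, h'⟩
    have h02 : ν 2 ≤ ν 0 := hνmono 0 2 (by decide)
    have h12 : ν 2 ≤ ν 1 := hνmono 1 2 (by decide)
    have hsub : ν 0 + ν 1 + ν 2 ≤ ∑ j, ν j := by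
      have h3 : ∑ j ∈ ({0,1,2} : Finset (Fin 10)), ν j ≤ ∑ j, ν j :=
        Finset.sum_le_sum_of_subset_of_nonneg (Finset.subset_univ _)
          (fun j _ _ => hν0 j)
      have h4 : ∑ j ∈ ({0,1,2} : Finset (Fin 10)), ν j = ν 0 + ν 1 + ν 2 := by
        rw [show ({0,1,2} : Finset (Fin 10)) = insert 0 (insert 1 {2}) from rfl,
          Finset.sum_insert (by decide), Finset.sum_insert (by decide),
          Finset.sum_singleton]
        ring
      linarith [h4.symm.trans_le h3]
    have hμnn : 0 ≤ ∑ i, μ i := Finset.sum_nonneg fun i _ => hμ0 i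
    linarith
  have key : ∀ n (I J' : Finset (Fin 10)), I.card + J'.card = n →
      (∀ j ∈ J', (2:Fin 10) ≤ j) →
      ∑ i ∈ I, μ i + ∑ j ∈ J', ν j < x / 6 - ε := by
    intro n
    induction n with
    | zero =>
      intro I J' hcard _
      have hI : I = ∅ := Finset.card_eq_zero.mp (by omega)
      have hJ : J' = ∅ := Finset.card_eq_zero.mp (by omega)
      subst hI; subst hJ
      simp only [Finset.sum_empty, add_zero]
      linarith
    | succ m ih =>
      intro I J' hcard hJ2
      rcases I.eq_empty_or_nonempty with hI | ⟨i, hi⟩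
      · subst hI
        have hJne : J'.Nonempty := by
          rw [← Finset.card_pos]
          simp only [Finset.card_empty, zero_add] at hcard
          omega
        obtain ⟨j, hj⟩ := hJne
        have hIH := ih ∅ (J'.erase j) (by
          rw [Finset.card_erase_of_mem hj]
          simp only [Finset.card_empty, zero_add] at hcard ⊢
          omega)
          (fun k hk => hJ2 k (Finset.mem_of_mem_erase hk))
        have hsplit : ∑ k ∈ J', ν k = ∑ k ∈ J'.erase j, ν k + ν j :=
          (Finset.sum_erase_add _ _ hj).symm
        have hνj : ν j < x / 6 - ε :=
          lt_of_le_of_lt (hνmono 2 j (hJ2 j hj)) hν2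
        have hle : ∑ i ∈ (∅ : Finset (Fin 10)), μ i + ∑ k ∈ J', ν k ≤ x / 3 + ε := by
          rw [hsplit]
          simp only [Finset.sum_empty, add_zero] at hIH ⊢
          linarith
        by_contra hcon
        push_neg at hcon
        exact hno ∅ J' ⟨hcon, hle⟩
      · have hIH := ih (I.erase i) J' (by
          have hpos : 0 < I.card := Finset.card_pos.mpr ⟨i, hi⟩
          rw [Finset.card_erase_of_mem hi]; omega) hJ2
        have hsplit : ∑ k ∈ I, μ k = ∑ k ∈ I.erase i, μ k + μ i :=
          (Finset.sum_erase_add _ _ hi).symm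
        have hμi : μ i ≤ x / 10 := hμ i
        have hle : ∑ k ∈ I, μ k + ∑ j ∈ J', ν j ≤ x / 3 + ε := by
          rw [hsplit]; linarith
        by_contra hcon
        push_neg at hcon
        exact hno I J' ⟨hcon, hle⟩
  have hkey := key (Finset.univ.card + ((Finset.univ.erase (0:Fin 10)).erase 1).card)
    Finset.univ ((Finset.univ.erase (0:Fin 10)).erase 1) rfl
    (by decide)
  have h0 : ∑ j ∈ Finset.univ.erase (0:Fin 10), ν j + ν 0 = ∑ j, ν j :=
    Finset.sum_erase_add _ _ (Finset.mem_univ 0)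
  have h1 : ∑ j ∈ (Finset.univ.erase (0:Fin 10)).erase 1, ν j + ν 1
      = ∑ j ∈ Finset.univ.erase (0:Fin 10), ν j :=
    Finset.sum_erase_add _ _ (by decide)
  linarith
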